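/- arXiv:0707.0698 — 2 statements merged into one kernel-verified Lean document; each statement's English description precedes it below -/
import Mathlib

section
/- If I is a proper pseudoprime ideal of 𝕂̃, then the annihilator of I is the zero ideal, Ann(I) = {0}; consequently, I is not countably generated as an ideal. -/
noncomputable section

set_option maxHeartbeats 1000000
set_option synthInstance.maxHeartbeats 400000

open scoped Classical

/-- The index set `(0,1) ⊆ ℝ` of the nets. -/
abbrev Eps : Type := Set.Ioo (0:ℝ) 1

variable (K : Type) [RCLike K]

/-- A net `(x_ε)_{ε ∈ (0,1)}` is moderate if `|x_ε| ≤ ε^a` for some `a ∈ ℝ`,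
for all sufficiently small `ε`. -/
def IsModerate (x : Eps → K) : Prop :=
  ∃ a : ℝ, ∃ ε₀ ∈ Set.Ioo (0:ℝ) 1, ∀ ε : Eps, (ε : ℝ) ≤ ε₀ → ‖x ε‖ ≤ (ε : ℝ) ^ a

/-- A net `(x_ε)_{ε ∈ (0,1)}` is negligible if for every `a ∈ ℝ`, `|x_ε| ≤ ε^a`
for all sufficiently small `ε`. -/
def IsNegligible (x : Eps → K) : Prop :=
  ∀ a : ℝ, ∃ ε₀ ∈ Set.Ioo (0:ℝ) 1, ∀ ε : Eps, (ε : ℝ) ≤ ε₀ → ‖x ε‖ ≤ (ε : ℝ) ^ a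

theorem rpow_two_bound {ε : ℝ} (h0 : 0 < ε) (h2 : ε ≤ 1/2) (a b : ℝ) :
    ε ^ a + ε ^ b ≤ ε ^ (min a b - 1) := by
  have h1 : ε ≤ 1 := h2.trans (by norm_num)
  have ha : ε ^ a ≤ ε ^ min a b :=
    Real.rpow_le_rpow_of_exponent_ge h0 h1 (min_le_left a b)
  have hb : ε ^ b ≤ ε ^ min a b :=
    Real.rpow_le_rpow_of_exponent_ge h0 h1 (min_le_right a b)
  have key : 2 * ε ^ min a b ≤ ε ^ (min a b - 1) := by
    rw [Real.rpow_sub h0, Real.rpow_one, le_div_iff₀ h0]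
    have hx : (0:ℝ) ≤ ε ^ min a b := (Real.rpow_pos_of_pos h0 _).le
    calc 2 * ε ^ min a b * ε ≤ 2 * ε ^ min a b * (1/2) := by
          apply mul_le_mul_of_nonneg_left h2 (by positivity)
      _ = ε ^ min a b := by ring
  calc ε ^ a + ε ^ b ≤ 2 * ε ^ min a b := by linarith
    _ ≤ ε ^ (min a b - 1) := key

/-- The ring of moderate nets, as a subring of `K^{(0,1)}`. -/
def Moderate : Subring (Eps → K) where
  carrier := {x | IsModerate K x}
  zero_mem' := by
    refine ⟨0, 1/2, by constructor <;> norm_num, fun ε _ => ?_⟩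
    simp [Real.rpow_zero]
  one_mem' := by
    refine ⟨0, 1/2, by constructor <;> norm_num, fun ε _ => ?_⟩
    simp [Real.rpow_zero]
  add_mem' := by
    rintro x y ⟨a, ε₀, h₀, ha⟩ ⟨b, ε₁, h₁, hb⟩
    refine ⟨min a b - 1, min (min ε₀ ε₁) (1/2), ⟨lt_min (lt_min h₀.1 h₁.1) (by norm_num), ?_⟩,
      fun ε hε => ?_⟩
    · calc min (min ε₀ ε₁) (1/2) ≤ 1/2 := min_le_right _ _
        _ < 1 := by norm_num
    · have hε₀ : (ε:ℝ) ≤ ε₀ := le_trans hε (le_trans (min_le_left _ _) (min_le_left _ _))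
      have hε₁ : (ε:ℝ) ≤ ε₁ := le_trans hε (le_trans (min_le_left _ _) (min_le_right _ _))
      have hε2 : (ε:ℝ) ≤ 1/2 := le_trans hε (min_le_right _ _)
      calc ‖(x + y) ε‖ ≤ ‖x ε‖ + ‖y ε‖ := norm_add_le _ _
        _ ≤ (ε:ℝ) ^ a + (ε:ℝ) ^ b := add_le_add (ha ε hε₀) (hb ε hε₁)
        _ ≤ (ε:ℝ) ^ (min a b - 1) := rpow_two_bound ε.2.1 hε2 a b
  neg_mem' := by
    rintro x ⟨a, ε₀, h₀, ha⟩
    exact ⟨a, ε₀, h₀, fun ε hε => by simpa using ha ε hε⟩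
  mul_mem' := by
    rintro x y ⟨a, ε₀, h₀, ha⟩ ⟨b, ε₁, h₁, hb⟩
    refine ⟨a + b, min ε₀ ε₁, ⟨lt_min h₀.1 h₁.1, lt_of_le_of_lt (min_le_left _ _) h₀.2⟩,
      fun ε hε => ?_⟩
    have hε₀ : (ε:ℝ) ≤ ε₀ := le_trans hε (min_le_left _ _)
    have hε₁ : (ε:ℝ) ≤ ε₁ := le_trans hε (min_le_right _ _)
    calc ‖(x * y) ε‖ = ‖x ε‖ * ‖y ε‖ := norm_mul _ _
      _ ≤ (ε:ℝ) ^ a * (ε:ℝ) ^ b :=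
        mul_le_mul (ha ε hε₀) (hb ε hε₁) (norm_nonneg _) (Real.rpow_pos_of_pos ε.2.1 _).le
      _ = (ε:ℝ) ^ (a + b) := (Real.rpow_add ε.2.1 _ _).symm

theorem mem_moderate {f : Eps → K} (h : IsModerate K f) : f ∈ Moderate K := h

/-- The ideal of negligible nets in the ring of moderate nets. -/
def Negligible : Ideal (Moderate K) where
  carrier := {x | IsNegligible K (x : Eps → K)}
  zero_mem' := by
    intro a
    refine ⟨1/2, by constructor <;> norm_num, fun ε _ => ?_⟩
    have : (0:ℝ) ≤ (ε:ℝ) ^ a := (Real.rpow_pos_of_pos ε.2.1 _).le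
    simpa using this
  add_mem' := by
    intro x y hx hy a
    obtain ⟨ε₀, h₀, ha⟩ := hx (a + 1)
    obtain ⟨ε₁, h₁, hb⟩ := hy (a + 1)
    refine ⟨min (min ε₀ ε₁) (1/2), ⟨lt_min (lt_min h₀.1 h₁.1) (by norm_num), ?_⟩, fun ε hε => ?_⟩
    · calc min (min ε₀ ε₁) (1/2) ≤ 1/2 := min_le_right _ _
        _ < 1 := by norm_num
    · have hε₀ : (ε:ℝ) ≤ ε₀ := le_trans hε (le_trans (min_le_left _ _) (min_le_left _ _))
      have hε₁ : (ε:ℝ) ≤ ε₁ := le_trans hε (le_trans (min_le_left _ _) (min_le_right _ _))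
      have hε2 : (ε:ℝ) ≤ 1/2 := le_trans hε (min_le_right _ _)
      have hbd := rpow_two_bound (ε := (ε:ℝ)) ε.2.1 hε2 (a+1) (a+1)
      simp only [min_self, add_sub_cancel_right] at hbd
      calc ‖((x + y : Moderate K) : Eps → K) ε‖ ≤ ‖(x : Eps → K) ε‖ + ‖(y : Eps → K) ε‖ := by
            push_cast
            exact norm_add_le _ _
        _ ≤ (ε:ℝ) ^ (a+1) + (ε:ℝ) ^ (a+1) := add_le_add (ha ε hε₀) (hb ε hε₁)
        _ ≤ (ε:ℝ) ^ a := hbd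
  smul_mem' := by
    intro c x hx
    show IsNegligible K ((c * x : Moderate K) : Eps → K)
    intro a
    obtain ⟨b, ε₀, h₀, hc⟩ := c.property
    obtain ⟨ε₁, h₁, hxa⟩ := hx (a - b)
    refine ⟨min ε₀ ε₁, ⟨lt_min h₀.1 h₁.1, lt_of_le_of_lt (min_le_left _ _) h₀.2⟩,
      fun ε hε => ?_⟩
    have hε₀ : (ε:ℝ) ≤ ε₀ := le_trans hε (min_le_left _ _)
    have hε₁ : (ε:ℝ) ≤ ε₁ := le_trans hε (min_le_right _ _)
    calc ‖((c * x : Moderate K) : Eps → K) ε‖ = ‖(c : Eps → K) ε‖ * ‖(x : Eps → K) ε‖ := by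
          push_cast
          exact norm_mul _ _
      _ ≤ (ε:ℝ) ^ b * (ε:ℝ) ^ (a - b) :=
        mul_le_mul (hc ε hε₀) (hxa ε hε₁) (norm_nonneg _) (Real.rpow_pos_of_pos ε.2.1 _).le
      _ = (ε:ℝ) ^ a := by rw [← Real.rpow_add ε.2.1]; ring_nf

/-- The ring of Colombeau generalized numbers: the quotient of the ring of
moderate nets by the ideal of negligible nets. -/
abbrev CGen : Type := Moderate K ⧸ Negligible K

/-- The quotient map. -/
abbrev cmk : Moderate K →+* CGen K := Ideal.Quotient.mk (Negligible K)

/-- A canonical representative of a Colombeau generalized number. -/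
def rep (x : CGen K) : Moderate K := (Ideal.Quotient.mk_surjective x).choose

theorem rep_spec (x : CGen K) : cmk K (rep K x) = x :=
  (Ideal.Quotient.mk_surjective x).choose_spec

theorem indicator_moderate (S : Set Eps) :
    IsModerate K (fun ε => if ε ∈ S then (1:K) else 0) := by
  refine ⟨0, 1/2, by constructor <;> norm_num, fun ε _ => ?_⟩
  rw [Real.rpow_zero]
  by_cases h : ε ∈ S <;> simp [h]

/-- `e_S`: the generalized number given by the characteristic function of `S ⊆ (0,1)`. -/
def eS (S : Set Eps) : CGen K :=
  cmk K ⟨fun ε => if ε ∈ S then (1:K) else 0, mem_moderate K (indicator_moderate K S)⟩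

theorem absNet_moderate (f : Moderate K) :
    IsModerate K (fun ε => ((‖(f : Eps → K) ε‖ : ℝ) : K)) := by
  obtain ⟨a, ε₀, h₀, h⟩ := f.property
  refine ⟨a, ε₀, h₀, fun ε hε => ?_⟩
  simpa [RCLike.norm_ofReal, abs_norm] using h ε hε

/-- `|x|`: the class of the net `(|x_ε|)_ε` (for any representative of `x`). -/
def absC (x : CGen K) : CGen K :=
  cmk K ⟨_, mem_moderate K (absNet_moderate K (rep K x))⟩

theorem minNet_moderate (f g : Moderate K) :
    IsModerate K (fun ε => ((min ‖(f : Eps → K) ε‖ ‖(g : Eps → K) ε‖ : ℝ) : K)) := by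
  obtain ⟨a, ε₀, h₀, h⟩ := f.property
  refine ⟨a, ε₀, h₀, fun ε hε => ?_⟩
  rw [RCLike.norm_ofReal, abs_of_nonneg (le_min (norm_nonneg _) (norm_nonneg _))]
  exact le_trans (min_le_left _ _) (h ε hε)

/-- `|x| ∧ |y|`: the class of the pointwise minimum of `(|x_ε|)_ε` and `(|y_ε|)_ε`. -/
def infAbs (x y : CGen K) : CGen K :=
  cmk K ⟨_, mem_moderate K (minNet_moderate K (rep K x) (rep K y))⟩

theorem sqrtNet_moderate (f : Moderate K) :
    IsModerate K (fun ε => ((Real.sqrt ‖(f : Eps → K) ε‖ : ℝ) : K)) := by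
  obtain ⟨a, ε₀, h₀, h⟩ := f.property
  refine ⟨a / 2, ε₀, h₀, fun ε hε => ?_⟩
  rw [RCLike.norm_ofReal, abs_of_nonneg (Real.sqrt_nonneg _)]
  calc Real.sqrt ‖(f : Eps → K) ε‖ ≤ Real.sqrt ((ε:ℝ) ^ a) := Real.sqrt_le_sqrt (h ε hε)
    _ = (ε:ℝ) ^ (a / 2) := by
        rw [Real.sqrt_eq_rpow, ← Real.rpow_mul ε.2.1.le]
        ring_nf

/-- `√|x|`: the class of the net `(√|x_ε|)_ε` (for any representative of `x`). -/
def sqrtAbs (x : CGen K) : CGen K :=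
  cmk K ⟨_, mem_moderate K (sqrtNet_moderate K (rep K x))⟩

/-- The annihilator `Ann(a) = {x : x·a = 0}` as an ideal. -/
def annIdeal (a : CGen K) : Ideal (CGen K) where
  carrier := {x | x * a = 0}
  zero_mem' := by simp
  add_mem' := by
    intro x y hx hy
    show (x + y) * a = 0
    rw [add_mul, hx, hy, add_zero]
  smul_mem' := by
    intro c x hx
    show c * x * a = 0
    rw [mul_assoc, hx, mul_zero]

/-- The order relation on `𝕂̃`: `x ≤ y` iff there exist (real-valued) representatives
`(u_ε)_ε` of `x` and `(v_ε)_ε` of `y` with `u_ε ≤ v_ε` for all `ε`. -/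
def leC (x y : CGen K) : Prop :=
  ∃ u v : Moderate K, cmk K u = x ∧ cmk K v = y ∧
    ∀ ε : Eps, ∃ r s : ℝ, (u : Eps → K) ε = (r : K) ∧ (v : Eps → K) ε = (s : K) ∧ r ≤ s

/-- A z-ideal: if `b ∈ I` and `a` belongs to exactly the same maximal ideals as `b`,
then `a ∈ I`. -/
def IsZIdeal (I : Ideal (CGen K)) : Prop :=
  ∀ a b : CGen K, b ∈ I →
    (∀ M : Ideal (CGen K), M.IsMaximal → (a ∈ M ↔ b ∈ M)) → a ∈ I


section Aux
variable (K : Type) [RCLike K]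

lemma cmk_eq_zero_iff (u : Moderate K) : cmk K u = 0 ↔ IsNegligible K (u : Eps → K) :=
  Ideal.Quotient.eq_zero_iff_mem

lemma exists_seq (P : ℕ → Eps → Prop)
    (h : ∀ (n : ℕ) (η : ℝ), η ∈ Set.Ioo (0:ℝ) 1 → ∃ ε : Eps, (ε:ℝ) ≤ η ∧ P n ε) :
    ∃ f : ℕ → Eps, (∀ n, P n (f n)) ∧ (∀ n, (f n : ℝ) ≤ 1/(n+2)) ∧
      StrictAnti (fun n => ((f n : ℝ))) := by
  choose F hF hP using h
  set F' : ℕ → ℝ → Eps := fun n η => if h : η ∈ Set.Ioo (0:ℝ) 1 then F n η h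
    else ⟨1/2, by constructor <;> norm_num⟩ with hF'def
  have hF' : ∀ (n : ℕ) (η : ℝ), η ∈ Set.Ioo (0:ℝ) 1 → (F' n η : ℝ) ≤ η ∧ P n (F' n η) := by
    intro n η hη
    simp only [hF'def, dif_pos hη]
    exact ⟨hF n η hη, hP n η hη⟩
  have mem : ∀ (n : ℕ) (x : Eps), min ((x:ℝ)/2) (1/(n+2)) ∈ Set.Ioo (0:ℝ) 1 := by
    intro n x
    constructor
    · exact lt_min (by linarith [x.2.1]) (by positivity)
    · exact lt_of_le_of_lt (min_le_left _ _) (by linarith [x.2.2])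
  set f : ℕ → Eps := fun n => Nat.rec (F' 0 (1/2))
    (fun n prev => F' (n+1) (min ((prev:ℝ)/2) (1/((n+1:ℕ)+2)))) n with hfdef
  have hf0 : f 0 = F' 0 (1/2) := rfl
  have hfs : ∀ n, f (n+1) = F' (n+1) (min ((f n : ℝ)/2) (1/((n+1:ℕ)+2))) := fun n => rfl
  have key : ∀ n, P n (f n) ∧ (f n : ℝ) ≤ 1/(n+2) := by
    intro n
    cases n with
    | zero =>
      have := hF' 0 (1/2) (by norm_num)
      rw [hf0]
      exact ⟨this.2, by push_cast; linarith [this.1]⟩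
    | succ m =>
      have hm := mem (m+1) (f m)
      have := hF' (m+1) _ hm
      rw [hfs m]
      refine ⟨this.2, ?_⟩
      have h2 := this.1.trans (min_le_right _ _)
      push_cast at h2 ⊢
      linarith
  have hstep : ∀ n, (f (n+1) : ℝ) < (f n : ℝ) := by
    intro n
    have hm := mem (n+1) (f n)
    have := ((hF' (n+1) _ hm).1).trans (min_le_left _ _)
    rw [← hfs n] at this
    linarith [(f n).2.1]
  exact ⟨f, fun n => (key n).1, fun n => (key n).2, strictAnti_nat_of_succ_lt hstep⟩

lemma one_in (I : Ideal (CGen K)) (n : ℕ) (g : ℕ → CGen K) (hg : ∀ i, g i ∈ I)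
    (b η : ℝ) (hη : η ∈ Set.Ioo (0:ℝ) 1)
    (hbig : ∀ ε : Eps, (ε:ℝ) ≤ η → ∃ i < n, (ε:ℝ)^b ≤ ‖(rep K (g i) : Eps → K) ε‖) :
    (1:CGen K) ∈ I := by
  set r : ℕ → Moderate K := fun i => rep K (g i) with hrdef
  set G : Eps → ℝ := fun ε => ∑ i ∈ Finset.range n, ‖(r i : Eps → K) ε‖^2 with hGdef
  have hGnonneg : ∀ ε, 0 ≤ G ε := fun ε => Finset.sum_nonneg fun i _ => sq_nonneg _
  have hGbig : ∀ ε : Eps, (ε:ℝ) ≤ η → ((ε:ℝ)^b)^2 ≤ G ε := by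
    intro ε hε
    obtain ⟨i, hin, hi⟩ := hbig ε hε
    calc ((ε:ℝ)^b)^2 ≤ ‖(r i : Eps → K) ε‖^2 := by
          apply sq_le_sq' _ hi
          have := (Real.rpow_pos_of_pos ε.2.1 b).le
          linarith [norm_nonneg ((r i : Eps → K) ε)]
      _ ≤ G ε := Finset.single_le_sum (f := fun j => ‖(r j : Eps → K) ε‖^2)
          (fun j _ => sq_nonneg _) (Finset.mem_range.mpr hin)
  have hGpos : ∀ ε : Eps, (ε:ℝ) ≤ η → 0 < G ε := by
    intro ε hε
    exact lt_of_lt_of_le (pow_pos (Real.rpow_pos_of_pos ε.2.1 b) 2) (hGbig ε hε)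
  set cnet : ℕ → Eps → K := fun i ε => if G ε = 0 then 0
    else (starRingEnd K) ((r i : Eps → K) ε) / ((G ε : ℝ) : K) with hcdef
  have cnorm : ∀ (i : ℕ) (ε : Eps), G ε ≠ 0 → ‖cnet i ε‖ = ‖(r i : Eps → K) ε‖ / G ε := by
    intro i ε h0
    simp only [hcdef, if_neg h0, norm_div, RCLike.norm_conj, RCLike.norm_ofReal,
      abs_of_nonneg (hGnonneg ε)]
  have cmod : ∀ i < n, IsModerate K (cnet i) := by
    intro i hin
    refine ⟨-b, η, hη, fun ε hε => ?_⟩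
    have hG0 := hGpos ε hε
    rw [cnorm i ε hG0.ne']
    set s := Real.sqrt (G ε) with hsdef
    have hss : s * s = G ε := Real.mul_self_sqrt (hGnonneg ε)
    have hA : ‖(r i : Eps → K) ε‖ ≤ s := by
      rw [hsdef, ← Real.sqrt_sq (norm_nonneg _)]
      exact Real.sqrt_le_sqrt
        (Finset.single_le_sum (f := fun j => ‖(r j : Eps → K) ε‖^2)
          (fun j _ => sq_nonneg _) (Finset.mem_range.mpr hin))
    have hp : (ε:ℝ)^b ≤ s := by
      rw [hsdef, ← Real.sqrt_sq (Real.rpow_pos_of_pos ε.2.1 b).le]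
      exact Real.sqrt_le_sqrt (hGbig ε hε)
    have hq : (ε:ℝ)^(-b) * (ε:ℝ)^b = 1 := by
      rw [← Real.rpow_add ε.2.1]; simp
    have hqpos : 0 < (ε:ℝ)^(-b) := Real.rpow_pos_of_pos ε.2.1 _
    rw [div_le_iff₀ hG0]
    have hs0 : 0 ≤ s := Real.sqrt_nonneg _
    calc ‖(r i : Eps → K) ε‖ ≤ s := hA
      _ = ((ε:ℝ)^(-b) * (ε:ℝ)^b) * s := by rw [hq, one_mul]
      _ = (ε:ℝ)^(-b) * ((ε:ℝ)^b * s) := by ring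
      _ ≤ (ε:ℝ)^(-b) * (s * s) := by
          apply mul_le_mul_of_nonneg_left (mul_le_mul_of_nonneg_right hp hs0) hqpos.le
      _ = (ε:ℝ)^(-b) * G ε := by rw [hss]
  set c : ℕ → Moderate K := fun i => if h : i < n then ⟨cnet i, mem_moderate K (cmod i h)⟩
    else 0 with hcdef2
  have key : cmk K (∑ i ∈ Finset.range n, c i * r i) = 1 := by
    rw [show (1 : CGen K) = cmk K 1 from (map_one _).symm]
    rw [Ideal.Quotient.eq]
    intro a
    refine ⟨η, hη, fun ε hε => ?_⟩
    have hG0 := (hGpos ε hε).ne'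
    have hval : ((∑ i ∈ Finset.range n, c i * r i - 1 : Moderate K) : Eps → K) ε
        = (∑ i ∈ Finset.range n, cnet i ε * (r i : Eps → K) ε) - 1 := by
      push_cast
      rw [Pi.sub_apply, Pi.one_apply, Finset.sum_apply]
      congr 1
      apply Finset.sum_congr rfl
      intro i hi
      have hin := Finset.mem_range.mp hi
      simp only [hcdef2, dif_pos hin]
      rfl
    rw [hval]
    have hsum : (∑ i ∈ Finset.range n, cnet i ε * (r i : Eps → K) ε) = 1 := by
      have : ∀ i ∈ Finset.range n, cnet i ε * (r i : Eps → K) ε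
          = ((‖(r i : Eps → K) ε‖^2 : ℝ) : K) / ((G ε : ℝ) : K) := by
        intro i _
        simp only [hcdef, if_neg hG0]
        rw [div_mul_eq_mul_div, RCLike.conj_mul]
        push_cast
        ring
      rw [Finset.sum_congr rfl this, ← Finset.sum_div, ← RCLike.ofReal_sum]
      rw [div_self]
      simp only [ne_eq, RCLike.ofReal_eq_zero]
      exact hG0
    rw [hsum]
    simp only [sub_self, norm_zero]
    exact (Real.rpow_pos_of_pos ε.2.1 a).le
  rw [← key, map_sum]
  apply Ideal.sum_mem
  intro i _
  rw [map_mul, hrdef]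
  exact I.mul_mem_left _ (by rw [rep_spec]; exact hg i)

lemma shrink (f : ℕ → Eps) (hfb : ∀ n, (f n : ℝ) ≤ 1/(n+2)) {ε₀ : ℝ} (h : 0 < ε₀) :
    ∃ m : ℕ, ∀ k ≥ m, (f k : ℝ) ≤ ε₀ := by
  obtain ⟨m, hm⟩ := exists_nat_ge (1/ε₀)
  refine ⟨m, fun k hk => ?_⟩
  have h1 := hfb k
  have h2 : (1:ℝ)/(k+2) ≤ ε₀ := by
    rw [div_le_iff₀ (by positivity)]
    have h3 : (1:ℝ) ≤ (m:ℝ) * ε₀ := (div_le_iff₀ h).mp hm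
    have h4 : (m:ℝ) ≤ (k:ℝ) := by exact_mod_cast hk
    nlinarith [h.le]
  linarith

end Aux

/-- a proper pseudoprime ideal `I` of `𝕂̃` has zero annihilator, and
is not countably generated. -/
theorem stmt16 (I : Ideal (CGen K)) (hI : I ≠ ⊤)
    (hp : ∀ a b : CGen K, a * b = 0 → a ∈ I ∨ b ∈ I) :
    (∀ x : CGen K, (∀ a ∈ I, x * a = 0) → x = 0) ∧
    ¬ ∃ S : Set (CGen K), S.Countable ∧ I = Ideal.span S := by
  have h1 : ∀ x : CGen K, (∀ a ∈ I, x * a = 0) → x = 0 := by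
    intro x hxann
    by_contra hx0
    have hnn : ¬ IsNegligible K ((rep K x : Eps → K)) := by
      intro h
      exact hx0 (by rw [← rep_spec K x]; exact (cmk_eq_zero_iff K _).mpr h)
    simp only [IsNegligible] at hnn
    push_neg at hnn
    obtain ⟨a, ha⟩ := hnn
    obtain ⟨f, hPf, hfb, hanti⟩ := exists_seq
      (fun _ ε => ((ε:ℝ))^a < ‖(rep K x : Eps → K) ε‖) (fun _ η hη => ha η hη)
    have key : ∀ T : Set Eps, (∀ ε, ε ∈ T → ((ε:ℝ))^a < ‖(rep K x : Eps → K) ε‖) →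
        (∀ η : ℝ, 0 < η → ∃ ε : Eps, ε ∈ T ∧ (ε:ℝ) ≤ η) → eS K T ∉ I := by
      intro T hTa hTd hmem
      have h0 := hxann _ hmem
      have heq : x * eS K T = cmk K (rep K x *
          ⟨fun ε => if ε ∈ T then (1:K) else 0, mem_moderate K (indicator_moderate K T)⟩) := by
        rw [map_mul, rep_spec]
        rfl
      rw [heq] at h0
      have hneg := (cmk_eq_zero_iff K _).mp h0
      obtain ⟨ε₀, hε₀, hb⟩ := hneg a
      obtain ⟨ε, hεT, hεle⟩ := hTd ε₀ hε₀.1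
      have hv : ‖(rep K x : Eps → K) ε * (if ε ∈ T then (1:K) else 0)‖ ≤ (ε:ℝ)^a :=
        hb ε hεle
      rw [if_pos hεT, mul_one] at hv
      exact absurd hv (not_le.mpr (hTa ε hεT))
    have hdense : ∀ j : ℕ → ℕ, (∀ m, m ≤ j m) →
        ∀ η : ℝ, 0 < η → ∃ ε : Eps, ε ∈ Set.range (fun k => f (j k)) ∧ (ε:ℝ) ≤ η := by
      intro j hj η hη
      obtain ⟨m0, hm0⟩ := shrink f hfb hη
      exact ⟨f (j m0), ⟨m0, rfl⟩, hm0 _ (hj m0)⟩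
    have hprop : ∀ j : ℕ → ℕ, ∀ ε, ε ∈ Set.range (fun k => f (j k)) →
        ((ε:ℝ))^a < ‖(rep K x : Eps → K) ε‖ := by
      rintro j ε ⟨k, rfl⟩
      exact hPf (j k)
    have hdisj : eS K (Set.range (fun k => f (2*k))) * eS K (Set.range (fun k => f (2*k+1))) = 0 := by
      have hmm : cmk K ((⟨fun ε => if ε ∈ Set.range (fun k => f (2*k)) then (1:K) else 0,
            mem_moderate K (indicator_moderate K _)⟩ : Moderate K) *
          ⟨fun ε => if ε ∈ Set.range (fun k => f (2*k+1)) then (1:K) else 0,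
            mem_moderate K (indicator_moderate K _)⟩)
          = eS K (Set.range (fun k => f (2*k))) * eS K (Set.range (fun k => f (2*k+1))) :=
        map_mul _ _ _
      rw [← hmm, cmk_eq_zero_iff]
      intro a'
      refine ⟨1/2, by constructor <;> norm_num, fun ε _ => ?_⟩
      show ‖(if ε ∈ Set.range (fun k => f (2*k)) then (1:K) else 0) *
            (if ε ∈ Set.range (fun k => f (2*k+1)) then (1:K) else 0)‖ ≤ (ε:ℝ)^a'
      rcases Classical.em (ε ∈ Set.range (fun k => f (2*k))) with h1 | h1
      · have h2 : ε ∉ Set.range (fun k => f (2*k+1)) := by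
          rintro ⟨j, hj⟩
          obtain ⟨k, hk⟩ := h1
          have heq2 : f (2*j+1) = f (2*k) := hj.trans hk.symm
          have : (f (2*j+1) : ℝ) = (f (2*k) : ℝ) := congrArg _ heq2
          have := hanti.injective this
          omega
        rw [if_neg h2, mul_zero, norm_zero]
        exact (Real.rpow_pos_of_pos ε.2.1 a').le
      · rw [if_neg h1, zero_mul, norm_zero]
        exact (Real.rpow_pos_of_pos ε.2.1 a').le
    rcases hp _ _ hdisj with h | h
    · exact key _ (hprop (fun k => 2*k)) (hdense (fun k => 2*k) (fun m => by show m ≤ 2*m; omega)) h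
    · exact key _ (hprop (fun k => 2*k+1)) (hdense (fun k => 2*k+1) (fun m => by show m ≤ 2*m+1; omega)) h
  refine ⟨h1, ?_⟩
  rintro ⟨S, hScount, hSspan⟩
  obtain ⟨g, hgr⟩ := (hScount.insert 0).exists_eq_range ⟨0, Set.mem_insert 0 S⟩
  have hspan' : I = Ideal.span (Set.range g) := by
    rw [hSspan, ← hgr]
    exact (Submodule.span_insert_zero).symm
  have hgI : ∀ i, g i ∈ I := by
    intro i
    have : g i ∈ insert (0:CGen K) S := hgr ▸ Set.mem_range_self i
    rcases Set.mem_insert_iff.mp this with h | h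
    · rw [h]; exact I.zero_mem
    · rw [hSspan]; exact Ideal.subset_span h
  have claim : ∀ (m : ℕ) (η : ℝ), η ∈ Set.Ioo (0:ℝ) 1 →
      ∃ ε : Eps, (ε:ℝ) ≤ η ∧ ∀ i < m, ‖(rep K (g i) : Eps → K) ε‖ < (ε:ℝ)^(m:ℝ) := by
    by_contra hcl
    push_neg at hcl
    obtain ⟨m, η, hη, hbig⟩ := hcl
    exact hI ((Ideal.eq_top_iff_one I).mpr (one_in K I m g hgI (m:ℝ) η hη hbig))
  obtain ⟨f, hPf, hfb, hanti⟩ := exists_seq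
    (fun m ε => ∀ i < m, ‖(rep K (g i) : Eps → K) ε‖ < (ε:ℝ)^(m:ℝ)) claim
  set T : Set Eps := Set.range f with hTdef
  have hTann : ∀ i, g i * eS K T = 0 := by
    intro i
    have heq : g i * eS K T = cmk K (rep K (g i) *
        ⟨fun ε => if ε ∈ T then (1:K) else 0, mem_moderate K (indicator_moderate K T)⟩) := by
      rw [map_mul, rep_spec]
      rfl
    rw [heq, cmk_eq_zero_iff]
    intro a
    obtain ⟨N0, hN0⟩ := exists_nat_ge a
    set N := max N0 (i+1) with hNdef
    refine ⟨(f N : ℝ), (f N).2, fun ε hε => ?_⟩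
    have hv : ((rep K (g i) *
        ⟨fun ε => if ε ∈ T then (1:K) else 0, mem_moderate K (indicator_moderate K T)⟩
        : Moderate K) : Eps → K) ε
        = (rep K (g i) : Eps → K) ε * (if ε ∈ T then (1:K) else 0) := rfl
    rw [hv]
    rcases Classical.em (ε ∈ T) with hT | hT
    · obtain ⟨k, hk⟩ := hT
      subst hk
      have hkN : N ≤ k := by
        by_contra hlt
        push_neg at hlt
        exact absurd hε (not_le.mpr (hanti hlt))
      have hik : i < k := by omega
      have hP := hPf k i hik
      rw [if_pos ⟨k, rfl⟩, mul_one]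
      have hka : a ≤ (k:ℝ) := by
        have : (N0:ℝ) ≤ (k:ℝ) := by exact_mod_cast (le_max_left N0 (i+1)).trans hkN
        linarith
      calc ‖(rep K (g i) : Eps → K) (f k)‖ ≤ ((f k : ℝ))^(k:ℝ) := hP.le
        _ ≤ ((f k : ℝ))^a := Real.rpow_le_rpow_of_exponent_ge (f k).2.1 (f k).2.2.le hka
    · rw [if_neg hT, mul_zero, norm_zero]
      exact (Real.rpow_pos_of_pos ε.2.1 a).le
  have hTI : ∀ aI ∈ I, eS K T * aI = 0 := by
    intro aI haI
    have hsub : I ≤ annIdeal K (eS K T) := by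
      rw [hspan']
      apply Ideal.span_le.mpr
      rintro _ ⟨i, rfl⟩
      exact hTann i
    have h0 : aI * eS K T = 0 := hsub haI
    rw [mul_comm]
    exact h0
  have hT0 : eS K T = 0 := h1 _ hTI
  have hneg : IsNegligible K (fun ε => if ε ∈ T then (1:K) else 0) :=
    (cmk_eq_zero_iff K _).mp hT0
  obtain ⟨ε₀, hε₀, hb⟩ := hneg 1
  obtain ⟨m0, hm0⟩ := shrink f hfb hε₀.1
  have hv : ‖(if f m0 ∈ T then (1:K) else 0)‖ ≤ ((f m0 : ℝ))^(1:ℝ) := hb (f m0) (hm0 m0 le_rfl)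
  rw [if_pos ⟨m0, rfl⟩, norm_one, Real.rpow_one] at hv
  linarith [(f m0).2.2]


end
end

section
/- Assume 2^{ℵ₀} < 2^{ℵ₁} (which holds, e.g., under the continuum hypothesis). Then there exist a proper ideal I of 𝕂̃ and a 𝕂̃-linear map φ : I → 𝕂̃ satisfying |φ(x)| ≤ |x| for all x ∈ I (hence φ is continuous for the sharp topology) such that φ cannot be extended to a 𝕂̃-linear map ψ : 𝕂̃ → 𝕂̃. -/
noncomputable section

set_option maxHeartbeats 1000000
set_option synthInstance.maxHeartbeats 400000

open scoped Classical

variable (K : Type) [RCLike K]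

/-! ### Auxiliary development for stmt18 -/

/-- The points `1/(n+2) ∈ (0,1)`. -/
def epsn (n : ℕ) : Eps :=
  ⟨1 / ((n : ℝ) + 2), by
    constructor
    · positivity
    · rw [div_lt_one (by positivity)]
      have : (0:ℝ) ≤ (n:ℝ) := n.cast_nonneg
      linarith⟩

theorem epsn_inj : Function.Injective epsn := by
  intro n m h
  have h' : 1 / ((n : ℝ) + 2) = 1 / ((m : ℝ) + 2) := congrArg Subtype.val h
  have hn : (0:ℝ) ≤ (n:ℝ) := n.cast_nonneg
  have hm : (0:ℝ) ≤ (m:ℝ) := m.cast_nonneg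
  field_simp at h'
  exact_mod_cast (by linarith : (n:ℝ) = m)

/-- Code of the length-`k` prefix of `f : ℕ → Bool`. -/
def nnn (f : ℕ → Bool) (k : ℕ) : ℕ :=
  Encodable.encode (List.ofFn fun i : Fin k => f i)

theorem nnn_eq {f g : ℕ → Bool} {k j : ℕ} (h : nnn f k = nnn g j) :
    k = j ∧ ∀ i < k, f i = g i := by
  have hl : (List.ofFn fun i : Fin k => f i) = List.ofFn fun i : Fin j => g i :=
    Encodable.encode_injective h
  have hk : k = j := by
    have := congrArg List.length hl
    simpa using this
  subst hk
  refine ⟨rfl, fun i hi => ?_⟩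
  have h2 := List.ofFn_injective hl
  exact congrFun h2 ⟨i, hi⟩

theorem nnn_inj (f : ℕ → Bool) : Function.Injective (nnn f) :=
  fun k j h => (nnn_eq h).1

/-- The almost disjoint family: `S f` is the set of coded prefixes of `f`. -/
def SS (f : ℕ → Bool) : Set Eps := Set.range fun k => epsn (nnn f k)

theorem SS_subset (f : ℕ → Bool) : SS f ⊆ Set.range epsn := by
  rintro ε ⟨k, rfl⟩; exact ⟨nnn f k, rfl⟩

theorem SS_almost_disjoint {f g : ℕ → Bool} (h : f ≠ g) : (SS f ∩ SS g).Finite := by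
  obtain ⟨n, hn⟩ := Function.ne_iff.mp h
  have hsub : SS f ∩ SS g ⊆ (fun k => epsn (nnn f k)) '' Set.Iic n := by
    rintro ε ⟨⟨k, rfl⟩, ⟨j, hj⟩⟩
    have hcode : nnn g j = nnn f k := epsn_inj hj
    obtain ⟨hkj, hag⟩ := nnn_eq hcode
    refine ⟨k, ?_, rfl⟩
    simp only [Set.mem_Iic]
    by_contra hk
    push_neg at hk
    exact hn ((hag n (by omega)).symm)
  exact Set.Finite.subset ((Set.finite_Iic n).image _) hsub

/-- `u : ℕ → ℕ` injective is unbounded. -/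
theorem exists_large {u : ℕ → ℕ} (hu : Function.Injective u) (m : ℕ) : ∃ k, m ≤ u k := by
  by_contra hcon
  push_neg at hcon
  have hmap : ∀ k ∈ Finset.range (m + 1), u k ∈ Finset.range m :=
    fun k _ => Finset.mem_range.mpr (hcon k)
  obtain ⟨a, _, b, _, hab, he⟩ :=
    Finset.exists_ne_map_eq_of_card_lt_of_maps_to (by simp) hmap
  exact hab (hu he)

/-- The indicator function of `S` as an element of the ring of moderate nets. -/
def indM (S : Set Eps) : Moderate K :=
  ⟨fun ε => if ε ∈ S then (1 : K) else 0, mem_moderate K (indicator_moderate K S)⟩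

theorem indM_coe (S : Set Eps) (ε : Eps) :
    (indM K S : Eps → K) ε = if ε ∈ S then (1:K) else 0 := rfl

theorem coe_sub_apply (u v : Moderate K) (ε : Eps) :
    ((u - v : Moderate K) : Eps → K) ε = (u : Eps → K) ε - (v : Eps → K) ε := rfl

theorem coe_mul_apply (u v : Moderate K) (ε : Eps) :
    ((u * v : Moderate K) : Eps → K) ε = (u : Eps → K) ε * (v : Eps → K) ε := rfl

theorem coe_sum_apply {ι : Type*} (s : Finset ι) (g : ι → Moderate K) (ε : Eps) :
    ((∑ i ∈ s, g i : Moderate K) : Eps → K) ε = ∑ i ∈ s, (g i : Eps → K) ε := by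
  classical
  induction s using Finset.induction with
  | empty => rfl
  | insert _ _ h ih => rw [Finset.sum_insert h, Finset.sum_insert h, ← ih]; rfl

theorem indM_mul (S T : Set Eps) : indM K S * indM K T = indM K (S ∩ T) := by
  apply Subtype.ext
  funext ε
  rw [show ((indM K S * indM K T : Moderate K) : Eps → K) ε
      = (if ε ∈ S then (1:K) else 0) * (if ε ∈ T then (1:K) else 0) from rfl]
  rw [indM_coe]
  by_cases hS : ε ∈ S <;> by_cases hT : ε ∈ T <;> simp [hS, hT, Set.mem_inter_iff]

theorem indM_empty : indM K (∅ : Set Eps) = 0 := by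
  apply Subtype.ext
  funext ε
  simp [indM]

/-- A net vanishing off a finite set is negligible. -/
theorem negligible_of_finite {F : Set Eps} (hF : F.Finite) (g : Eps → K)
    (hg : ∀ ε, ε ∉ F → g ε = 0) : IsNegligible K g := by
  obtain ⟨ε₀, h₀, hsmall⟩ : ∃ ε₀ ∈ Set.Ioo (0:ℝ) 1, ∀ ε ∈ F, ε₀ < (ε : ℝ) := by
    rcases hF.toFinset.eq_empty_or_nonempty with he | hne
    · refine ⟨1/2, by constructor <;> norm_num, fun ε hε => ?_⟩
      exact absurd (hF.mem_toFinset.mpr hε) (by simp [he])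
    · obtain ⟨w, hw, hwd⟩ := hF.toFinset.exists_mem_eq_inf' hne (fun ε : Eps => (ε : ℝ))
      refine ⟨(w : ℝ) / 2, ⟨by have := w.2.1; positivity, by have := w.2.2; linarith⟩,
        fun ε hε => ?_⟩
      have h3 : (w : ℝ) ≤ (ε : ℝ) := by
        rw [← hwd]
        exact Finset.inf'_le (fun ε : Eps => (ε : ℝ)) (hF.mem_toFinset.mpr hε)
      have := w.2.1
      linarith
  intro a
  refine ⟨ε₀, h₀, fun ε hε => ?_⟩
  have hεF : ε ∉ F := fun hmem => absurd hε (not_le.mpr (hsmall ε hmem))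
  rw [hg ε hεF]
  simpa using (Real.rpow_pos_of_pos ε.2.1 a).le

theorem indM_finite_negligible {F : Set Eps} (hF : F.Finite) :
    IsNegligible K ((indM K F : Eps → K)) :=
  negligible_of_finite K hF _ (fun ε hε => by simp [indM_coe, hε])

/-- The idempotents `e_f`. -/
def eF (f : ℕ → Bool) : CGen K := cmk K (indM K (SS f))

theorem eF_mul_ne {f g : ℕ → Bool} (h : f ≠ g) : eF K f * eF K g = 0 := by
  unfold eF
  rw [← map_mul, indM_mul, Ideal.Quotient.eq_zero_iff_mem]
  exact indM_finite_negligible K (SS_almost_disjoint h)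

theorem eF_ne_zero (f : ℕ → Bool) : eF K f ≠ 0 := by
  intro h
  rw [eF, Ideal.Quotient.eq_zero_iff_mem] at h
  have h1 : IsNegligible K ((indM K (SS f) : Eps → K)) := h
  obtain ⟨ε₀, h₀, hb⟩ := h1 1
  obtain ⟨M, hM⟩ := exists_nat_gt (1 / ε₀)
  obtain ⟨k, hk⟩ := exists_large (nnn_inj f) M
  set ε := epsn (nnn f k) with hε
  have hval : (ε : ℝ) = 1 / ((nnn f k : ℝ) + 2) := rfl
  have hMk : (M : ℝ) ≤ (nnn f k : ℝ) := by exact_mod_cast hk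
  have hεsmall : (ε : ℝ) ≤ ε₀ := by
    rw [hval, div_le_iff₀ (by positivity)]
    have h2 : 1 / ε₀ < (nnn f k : ℝ) + 2 := by linarith
    rw [div_lt_iff₀ h₀.1] at h2
    linarith
  have hthis := hb ε hεsmall
  have hmem : ε ∈ SS f := ⟨k, rfl⟩
  rw [indM_coe, if_pos hmem, Real.rpow_one] at hthis
  simp only [norm_one] at hthis
  exact absurd (lt_of_le_of_lt hthis ε.2.2) (by norm_num)

/-- Points `2/(2m+5)` which are not of the form `1/(n+2)`. -/
def qpt (m : ℕ) : Eps :=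
  ⟨2 / (2 * (m : ℝ) + 5), by
    constructor
    · positivity
    · rw [div_lt_one (by positivity)]
      have : (0:ℝ) ≤ (m:ℝ) := m.cast_nonneg
      linarith⟩

theorem qpt_not_mem (m : ℕ) : qpt m ∉ Set.range epsn := by
  rintro ⟨n, hn⟩
  have h' : 1 / ((n : ℝ) + 2) = 2 / (2 * (m : ℝ) + 5) := congrArg Subtype.val hn
  have hn0 : (0:ℝ) ≤ (n:ℝ) := n.cast_nonneg
  have hm0 : (0:ℝ) ≤ (m:ℝ) := m.cast_nonneg
  field_simp at h'
  have : 2 * m + 5 = 2 * (n + 2) := by exact_mod_cast h'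
  omega

/-- The class of the indicator of the complement of `{1/(n+2)}`. -/
def compE : CGen K := cmk K (indM K ((Set.range epsn)ᶜ))

theorem compE_ne_zero : compE K ≠ 0 := by
  intro h
  rw [compE, Ideal.Quotient.eq_zero_iff_mem] at h
  have h1 : IsNegligible K ((indM K ((Set.range epsn)ᶜ) : Eps → K)) := h
  obtain ⟨ε₀, h₀, hb⟩ := h1 1
  obtain ⟨M, hM⟩ := exists_nat_gt (1 / ε₀)
  set ε := qpt M with hε
  have hval : (ε : ℝ) = 2 / (2 * (M : ℝ) + 5) := rfl
  have hεsmall : (ε : ℝ) ≤ ε₀ := by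
    rw [hval, div_le_iff₀ (by positivity)]
    have h2 : 1 / ε₀ < (M : ℝ) := hM
    rw [div_lt_iff₀ h₀.1] at h2
    nlinarith [h₀.1]
  have hthis := hb ε hεsmall
  have hmem : ε ∈ (Set.range epsn)ᶜ := qpt_not_mem M
  rw [indM_coe, if_pos hmem, Real.rpow_one] at hthis
  simp only [norm_one] at hthis
  exact absurd (lt_of_le_of_lt hthis ε.2.2) (by norm_num)

theorem compE_mul_eF (f : ℕ → Bool) : compE K * eF K f = 0 := by
  unfold compE eF
  rw [← map_mul, indM_mul]
  have hemp : (Set.range epsn)ᶜ ∩ SS f = ∅ := by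
    apply Set.eq_empty_of_forall_notMem
    rintro ε ⟨hc, hs⟩
    exact hc (SS_subset f hs)
  rw [hemp, indM_empty, map_zero]

/-- Two moderate nets with negligible pointwise difference have the same class. -/
theorem cmk_eq_iff (u v : Moderate K) :
    cmk K u = cmk K v ↔ IsNegligible K (fun ε => (u : Eps → K) ε - (v : Eps → K) ε) := by
  rw [Ideal.Quotient.eq]
  constructor
  · intro h
    have h' : IsNegligible K ((u - v : Moderate K) : Eps → K) := h
    exact h'
  · intro h
    show IsNegligible K ((u - v : Moderate K) : Eps → K)
    exact h

/-- `absC` is independent of the representative. -/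
theorem absC_cmk (w : Moderate K) :
    absC K (cmk K w) = cmk K ⟨fun ε => ((‖(w : Eps → K) ε‖ : ℝ) : K),
      mem_moderate K (absNet_moderate K w)⟩ := by
  unfold absC
  rw [cmk_eq_iff]
  have hneg : IsNegligible K (fun ε =>
      (rep K (cmk K w) : Eps → K) ε - (w : Eps → K) ε) := by
    rw [← cmk_eq_iff]
    exact rep_spec K (cmk K w)
  intro a
  obtain ⟨ε₀, h₀, hb⟩ := hneg a
  refine ⟨ε₀, h₀, fun ε hε => ?_⟩
  have hb' := hb ε hε
  simp only at hb' ⊢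
  calc ‖((‖(rep K (cmk K w) : Eps → K) ε‖ : ℝ) : K) - ((‖(w : Eps → K) ε‖ : ℝ) : K)‖
      = ‖(‖(rep K (cmk K w) : Eps → K) ε‖ - ‖(w : Eps → K) ε‖ : ℝ)‖ := by
        rw [← RCLike.ofReal_sub, RCLike.norm_ofReal]
        exact (Real.norm_eq_abs _).symm
    _ ≤ ‖(rep K (cmk K w) : Eps → K) ε - (w : Eps → K) ε‖ := by
        rw [Real.norm_eq_abs]
        exact abs_norm_sub_norm_le _ _
    _ ≤ (ε : ℝ) ^ a := hb'

theorem eF_mul_self (f : ℕ → Bool) : eF K f * eF K f = eF K f := by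
  unfold eF
  rw [← map_mul, indM_mul, Set.inter_self]

theorem fsum {α M N : Type*} [Zero M] [AddCommMonoid N] (m : α →₀ M) (g : α → M → N) :
    m.sum g = ∑ a ∈ m.support, g a (m a) := rfl

/-- Lifting a sequence indexed by `ℕ` to a net on `(0,1)` via the points `1/(n+2)`. -/
def liftNet (d : ℕ → K) : Eps → K :=
  fun ε => if h : ε ∈ Set.range epsn then d h.choose else 0

theorem liftNet_eq (d : ℕ → K) (n : ℕ) : liftNet K d (epsn n) = d n := by
  have h : epsn n ∈ Set.range epsn := ⟨n, rfl⟩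
  rw [liftNet, dif_pos h]
  congr 1
  exact epsn_inj h.choose_spec

/-- The decoding map: from a sequence `d` (the values of a candidate multiplier at the
points `1/(n+2)`) to the family of booleans it can realize. -/
def PhiMap (d : ℕ → K) (f : ℕ → Bool) : Bool :=
  decide (IsNegligible K (fun ε => if ε ∈ SS f then liftNet K d ε - 1 else 0))

theorem recover (t : (ℕ → Bool) → Bool) (C : CGen K)
    (hC : ∀ f, C * eF K f = (if t f then (1 : CGen K) else 0) * eF K f) :
    t = PhiMap K (fun n => (rep K C : Eps → K) (epsn n)) := by
  funext f
  set d : ℕ → K := fun n => (rep K C : Eps → K) (epsn n) with hd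
  have hnet : (fun ε => if ε ∈ SS f then liftNet K d ε - 1 else 0)
      = ((rep K C * indM K (SS f) - indM K (SS f) : Moderate K) : Eps → K) := by
    funext ε
    rw [coe_sub_apply, coe_mul_apply, indM_coe]
    by_cases hε : ε ∈ SS f
    · rw [if_pos hε, if_pos hε, mul_one]
      obtain ⟨n, hn⟩ := SS_subset f hε
      rw [← hn, liftNet_eq]
    · rw [if_neg hε, if_neg hε, mul_zero, sub_zero]
  have e1 : C * eF K f = cmk K (rep K C * indM K (SS f)) := by
    rw [map_mul, rep_spec]; rfl
  cases ht : t f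
  · -- t f = false : C * e_f = 0
    have h1 : C * eF K f = 0 := by rw [hC f, ht, if_neg (by simp), zero_mul]
    have hA : (rep K C * indM K (SS f)) ∈ Negligible K := by
      rw [← Ideal.Quotient.eq_zero_iff_mem, ← e1]
      exact h1
    have hnot : ¬ IsNegligible K (fun ε => if ε ∈ SS f then liftNet K d ε - 1 else 0) := by
      intro h2
      rw [hnet] at h2
      have hAB : (rep K C * indM K (SS f) - indM K (SS f)) ∈ Negligible K := h2
      have hB : indM K (SS f) ∈ Negligible K := by
        have heq : indM K (SS f)
            = rep K C * indM K (SS f) - (rep K C * indM K (SS f) - indM K (SS f)) := by ring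
        rw [heq]
        exact sub_mem hA hAB
      have : eF K f = 0 := by
        rw [eF, Ideal.Quotient.eq_zero_iff_mem]
        exact hB
      exact eF_ne_zero K f this
    exact (decide_eq_false hnot).symm
  · -- t f = true : C * e_f = e_f
    have h1 : C * eF K f = eF K f := by rw [hC f, ht, if_pos rfl, one_mul]
    have h2 : IsNegligible K (fun ε => if ε ∈ SS f then liftNet K d ε - 1 else 0) := by
      rw [hnet]
      have h3 : cmk K (rep K C * indM K (SS f)) = cmk K (indM K (SS f)) := by
        rw [← e1]; exact h1
      have h4 := (cmk_eq_iff K _ _).mp h3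
      intro a
      obtain ⟨ε₀, h₀, hb⟩ := h4 a
      exact ⟨ε₀, h₀, fun ε hε => by
        have := hb ε hε
        rw [coe_sub_apply]
        exact this⟩
    exact (decide_eq_true h2).symm

/-- There is a boolean family not realized by any candidate multiplier. -/
theorem exists_t : ∃ t : (ℕ → Bool) → Bool, t ∉ Set.range (PhiMap K) := by
  by_contra hcon
  push_neg at hcon
  have hsurj : Function.Surjective (PhiMap K) := fun t => hcon t
  have hle := Cardinal.mk_le_of_surjective hsurj
  have hK : Cardinal.mk K ≤ Cardinal.continuum := by
    have hinj : Function.Injective (fun x : K => (RCLike.re x, RCLike.im x)) := by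
      intro x y h
      exact RCLike.ext (congrArg Prod.fst h) (congrArg Prod.snd h)
    calc Cardinal.mk K ≤ Cardinal.mk (ℝ × ℝ) := Cardinal.mk_le_of_injective hinj
      _ = Cardinal.continuum := by
          simp only [Cardinal.mk_prod, Cardinal.lift_id, Cardinal.mk_real]
          exact Cardinal.mul_eq_self Cardinal.aleph0_le_continuum
  have h1 : Cardinal.mk (ℕ → K) ≤ Cardinal.continuum := by
    calc Cardinal.mk (ℕ → K) = Cardinal.mk K ^ Cardinal.aleph0 := by
          rw [← Cardinal.mk_nat, Cardinal.power_def]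
      _ ≤ Cardinal.continuum ^ Cardinal.aleph0 :=
          Cardinal.power_le_power_right hK
      _ = Cardinal.continuum := Cardinal.continuum_power_aleph0
  have h2 : Cardinal.mk ((ℕ → Bool) → Bool) = 2 ^ Cardinal.continuum := by
    have ha : Cardinal.mk (ℕ → Bool) = Cardinal.continuum := by
      rw [← Cardinal.power_def, Cardinal.mk_bool, Cardinal.mk_nat, Cardinal.two_power_aleph0]
    rw [← Cardinal.power_def, Cardinal.mk_bool, ha]
  have hcantor := Cardinal.cantor Cardinal.continuum
  rw [h2] at hle
  exact absurd (hle.trans h1) (not_le.mpr hcantor)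

/-- The map `(c_f)_f ↦ ∑ c_f e_f`, whose range is the ideal `I`. -/
def piMap : ((ℕ → Bool) →₀ CGen K) →ₗ[CGen K] CGen K :=
  Finsupp.linearCombination (CGen K) (eF K)

/-- The twisted map `(c_f)_f ↦ ∑ c_f t_f e_f`. -/
def tauMap (t : (ℕ → Bool) → Bool) : ((ℕ → Bool) →₀ CGen K) →ₗ[CGen K] CGen K :=
  Finsupp.linearCombination (CGen K) (fun f => (if t f then (1 : CGen K) else 0) * eF K f)

theorem mul_piMap (c : CGen K) (hc : ∀ f, c * eF K f = 0)
    (m : (ℕ → Bool) →₀ CGen K) : c * piMap K m = 0 := by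
  rw [piMap, Finsupp.linearCombination_apply, Finsupp.mul_sum, fsum]
  apply Finset.sum_eq_zero
  intro f _
  rw [smul_eq_mul, mul_left_comm, hc, mul_zero]

theorem ker_le (t : (ℕ → Bool) → Bool) :
    LinearMap.ker (piMap K) ≤ LinearMap.ker (tauMap K t) := by
  intro m hm
  rw [LinearMap.mem_ker] at hm ⊢
  have hg : ∀ g, m g * eF K g = 0 := by
    intro g
    have h1 : eF K g * piMap K m = 0 := by rw [hm, mul_zero]
    rw [piMap, Finsupp.linearCombination_apply, Finsupp.mul_sum, fsum] at h1
    rw [Finset.sum_eq_single g (fun b _ hb => by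
        rw [smul_eq_mul, mul_left_comm, eF_mul_ne K (Ne.symm hb), mul_zero])
      (fun hg => by rw [Finsupp.notMem_support_iff.mp hg, zero_smul, mul_zero])] at h1
    rw [smul_eq_mul, mul_left_comm, eF_mul_self] at h1
    linear_combination h1
  rw [tauMap, Finsupp.linearCombination_apply, fsum]
  apply Finset.sum_eq_zero
  intro f _
  rw [smul_eq_mul, mul_left_comm, hg, mul_zero]

/-- `t f` as an element of the ring of moderate nets. -/
def tnum (t : (ℕ → Bool) → Bool) (f : ℕ → Bool) : Moderate K := if t f then 1 else 0

theorem tnum_coe (t : (ℕ → Bool) → Bool) (f : ℕ → Bool) (ε : Eps) :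
    (tnum K t f : Eps → K) ε = if t f then (1:K) else 0 := by
  rw [tnum]; split <;> rfl

/-- A canonical representative of `tauMap t m`. -/
def bigNet (t : (ℕ → Bool) → Bool) (m : (ℕ → Bool) →₀ CGen K) : Moderate K :=
  ∑ f ∈ m.support, tnum K t f * rep K (m f) * indM K (SS f)

theorem cmk_bigNet (t : (ℕ → Bool) → Bool) (m : (ℕ → Bool) →₀ CGen K) :
    cmk K (bigNet K t m) = tauMap K t m := by
  rw [bigNet, map_sum, tauMap, Finsupp.linearCombination_apply, fsum]
  apply Finset.sum_congr rfl
  intro f _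
  rw [map_mul, map_mul, rep_spec, smul_eq_mul]
  have hct : cmk K (tnum K t f) = (if t f then (1 : CGen K) else 0) := by
    rw [tnum]; split <;> simp
  rw [hct, eF]
  ring

theorem piMap_eq (m : (ℕ → Bool) →₀ CGen K) :
    piMap K m = tauMap K (fun _ => true) m := by
  rw [piMap, tauMap, Finsupp.linearCombination_apply, Finsupp.linearCombination_apply,
    fsum, fsum]
  apply Finset.sum_congr rfl
  intro f _
  simp

theorem bigNet_le (t : (ℕ → Bool) → Bool) (m : (ℕ → Bool) →₀ CGen K) :
    ∃ F : Set Eps, F.Finite ∧ ∀ ε, ε ∉ F →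
      ‖(bigNet K t m : Eps → K) ε‖ ≤ ‖(bigNet K (fun _ => true) m : Eps → K) ε‖ := by
  refine ⟨⋃ f ∈ (m.support : Set (ℕ → Bool)), ⋃ g ∈ (m.support : Set (ℕ → Bool)),
    {ε | f ≠ g ∧ ε ∈ SS f ∧ ε ∈ SS g}, ?_, ?_⟩
  · apply Set.Finite.biUnion m.support.finite_toSet
    intro f _
    apply Set.Finite.biUnion m.support.finite_toSet
    intro g _
    by_cases hfg : f = g
    · subst hfg
      convert Set.finite_empty
      simp
    · apply Set.Finite.subset (SS_almost_disjoint hfg)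
      rintro ε ⟨_, h1, h2⟩
      exact ⟨h1, h2⟩
  · intro ε hε
    have huniq : ∀ f ∈ m.support, ∀ g ∈ m.support, ε ∈ SS f → ε ∈ SS g → f = g := by
      intro f hf g hg h1 h2
      by_contra hne
      exact hε (Set.mem_biUnion hf (Set.mem_biUnion hg ⟨hne, h1, h2⟩))
    rw [bigNet, bigNet, coe_sum_apply, coe_sum_apply]
    by_cases hex : ∃ f ∈ m.support, ε ∈ SS f
    · obtain ⟨f₀, hf₀, hεf₀⟩ := hex
      have hzero : ∀ (t' : (ℕ → Bool) → Bool), ∀ b ∈ m.support, b ≠ f₀ →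
          ((tnum K t' b * rep K (m b) * indM K (SS b) : Moderate K) : Eps → K) ε = 0 := by
        intro t' b hb hbne
        have hεb : ε ∉ SS b := fun hmem => hbne (huniq b hb f₀ hf₀ hmem hεf₀)
        rw [coe_mul_apply, indM_coe, if_neg hεb, mul_zero]
      rw [Finset.sum_eq_single f₀ (hzero t) (fun h => absurd hf₀ h),
        Finset.sum_eq_single f₀ (hzero (fun _ => true)) (fun h => absurd hf₀ h)]
      rw [coe_mul_apply, coe_mul_apply, coe_mul_apply, coe_mul_apply,
        indM_coe, if_pos hεf₀, tnum_coe, tnum_coe, if_pos rfl]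
      by_cases ht : t f₀
      · rw [if_pos ht]
      · rw [if_neg ht, zero_mul, zero_mul, norm_zero]
        positivity
    · push_neg at hex
      rw [Finset.sum_eq_zero (fun b hb => by
          rw [coe_mul_apply, indM_coe, if_neg (hex b hb), mul_zero]),
        Finset.sum_eq_zero (fun b hb => by
          rw [coe_mul_apply, indM_coe, if_neg (hex b hb), mul_zero])]

set_option maxHeartbeats 4000000 in
/-- The linear map `φ` on the ideal `I = range π`, induced by `τ`. -/
def phiAux (t : (ℕ → Bool) → Bool) :
    LinearMap.range (piMap K) →ₗ[CGen K] CGen K :=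
  ((LinearMap.ker (piMap K)).liftQ (tauMap K t) (ker_le K t)).comp
    (LinearMap.quotKerEquivRange (piMap K)).symm.toLinearMap

set_option maxHeartbeats 4000000 in
theorem phiAux_apply (t : (ℕ → Bool) → Bool) (m : (ℕ → Bool) →₀ CGen K)
    (h : piMap K m ∈ LinearMap.range (piMap K)) :
    phiAux K t ⟨piMap K m, h⟩ = tauMap K t m := by
  rw [phiAux]
  simp only [LinearMap.comp_apply, LinearEquiv.coe_coe]
  rw [LinearMap.quotKerEquivRange_symm_apply_image (piMap K) m h,
    Submodule.mkQ_apply, Submodule.liftQ_apply]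

theorem tau_le_pi (t : (ℕ → Bool) → Bool) (m : (ℕ → Bool) →₀ CGen K) :
    leC K (absC K (tauMap K t m)) (absC K (piMap K m)) := by
  obtain ⟨F, hF, hle⟩ := bigNet_le K t m
  set Y := bigNet K t m with hY
  set X := bigNet K (fun _ => true) m with hX
  have hYmod : IsModerate K (fun ε => if ε ∈ F then (0:K)
      else ((‖(Y : Eps → K) ε‖ : ℝ) : K)) := by
    obtain ⟨a, ε₀, h₀, hb⟩ := Y.2
    refine ⟨a, ε₀, h₀, fun ε hε => ?_⟩
    show ‖if ε ∈ F then (0:K) else ((‖(Y : Eps → K) ε‖ : ℝ) : K)‖ ≤ (ε : ℝ) ^ a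
    by_cases hεF : ε ∈ F
    · rw [if_pos hεF, norm_zero]
      exact (Real.rpow_pos_of_pos ε.2.1 a).le
    · rw [if_neg hεF, RCLike.norm_ofReal, abs_norm]
      exact hb ε hε
  refine ⟨⟨_, mem_moderate K hYmod⟩,
    ⟨_, mem_moderate K (absNet_moderate K X)⟩, ?_, ?_, ?_⟩
  · rw [← cmk_bigNet, ← hY, absC_cmk, cmk_eq_iff]
    apply negligible_of_finite K hF
    intro ε hεF
    show (if ε ∈ F then (0:K) else ((‖(Y : Eps → K) ε‖ : ℝ) : K))
        - ((‖(Y : Eps → K) ε‖ : ℝ) : K) = 0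
    rw [if_neg hεF, sub_self]
  · rw [piMap_eq, ← cmk_bigNet, ← hX, absC_cmk]
  · intro ε
    refine ⟨if ε ∈ F then 0 else ‖(Y : Eps → K) ε‖, ‖(X : Eps → K) ε‖, ?_, rfl, ?_⟩
    · show (if ε ∈ F then (0:K) else ((‖(Y : Eps → K) ε‖ : ℝ) : K))
          = ((if ε ∈ F then 0 else ‖(Y : Eps → K) ε‖ : ℝ) : K)
      by_cases hεF : ε ∈ F <;> simp [hεF]
    · by_cases hεF : ε ∈ F
      · rw [if_pos hεF]
        positivity
      · rw [if_neg hεF]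
        exact hle ε hεF


set_option maxHeartbeats 16000000 in
/-- assuming `2^{ℵ₀} < 2^{ℵ₁}`, there are a proper ideal `I` of `𝕂̃` and a
`𝕂̃`-linear `φ : I → 𝕂̃` with `|φ(x)| ≤ |x|` for all `x ∈ I` which cannot be extended
to a `𝕂̃`-linear map `𝕂̃ → 𝕂̃`. -/
theorem stmt18 (hCH : (2 : Cardinal) ^ Cardinal.aleph0 < 2 ^ Cardinal.aleph 1) :
    ∃ I : Ideal (CGen K), I ≠ ⊤ ∧
      ∃ φ : I →ₗ[CGen K] CGen K,
        (∀ x : I, leC K (absC K (φ x)) (absC K (x : CGen K))) ∧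
        ¬ ∃ ψ : CGen K →ₗ[CGen K] CGen K, ∀ x : I, ψ (x : CGen K) = φ x := by
  obtain ⟨t, ht⟩ := exists_t K
  refine ⟨LinearMap.range (piMap K), ?_, ?_⟩
  · intro htop
    have h1 : (1 : CGen K) ∈ LinearMap.range (piMap K) := by
      rw [htop]; exact Submodule.mem_top
    obtain ⟨m, hm⟩ := h1
    have h2 := mul_piMap K (compE K) (compE_mul_eF K) m
    rw [hm, mul_one] at h2
    exact compE_ne_zero K h2
  · have phi_apply : ∀ (m : (ℕ → Bool) →₀ CGen K)
        (h : piMap K m ∈ LinearMap.range (piMap K)),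
        phiAux K t ⟨piMap K m, h⟩ = tauMap K t m := phiAux_apply K t
    refine ⟨phiAux K t, ?_, ?_⟩
    · intro x
      obtain ⟨m, hm⟩ := x.2
      have hx : (⟨piMap K m, LinearMap.mem_range_self _ m⟩ : LinearMap.range (piMap K)) = x := Subtype.ext hm
      rw [← hx, phi_apply]
      exact tau_le_pi K t m
    · rintro ⟨ψ, hψ⟩
      have hC : ∀ f, ψ 1 * eF K f = (if t f then (1 : CGen K) else 0) * eF K f := by
        intro f
        have hsingle : piMap K (Finsupp.single f (1 : CGen K)) = eF K f := by
          rw [piMap, Finsupp.linearCombination_single, one_smul]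
        have hmem : eF K f ∈ LinearMap.range (piMap K) := ⟨Finsupp.single f 1, hsingle⟩
        have h1 := hψ ⟨eF K f, hmem⟩
        have hx : (⟨piMap K (Finsupp.single f (1 : CGen K)),
            LinearMap.mem_range_self _ (Finsupp.single f (1 : CGen K))⟩ :
            LinearMap.range (piMap K)) = ⟨eF K f, hmem⟩ := Subtype.ext hsingle
        rw [← hx, phi_apply] at h1
        rw [tauMap, Finsupp.linearCombination_single, one_smul] at h1
        have hcoe : ((⟨piMap K (Finsupp.single f (1 : CGen K)),
            LinearMap.mem_range_self _ (Finsupp.single f (1 : CGen K))⟩ :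
            LinearMap.range (piMap K)) : CGen K) = eF K f := hsingle
        rw [hcoe] at h1
        have h3 := ψ.map_smul (eF K f) 1
        rw [smul_eq_mul, smul_eq_mul, mul_one] at h3
        rw [h3, mul_comm] at h1
        exact h1
      have hrec := recover K t (ψ 1) hC
      exact ht ⟨_, hrec.symm⟩



end
end
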